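/- Let N, R be natural numbers, and let ε, δ be real numbers with 0 < ε < R/N < 1 and δ > 0. If (R/(e·ε·N))^R ≥ e^{−εN}/δ, then (Nε/R)^R · ((1−ε)/(1−R/N))^{N−R} ≤ δ. -/

import Mathlib

open Finset

/-- **Sufficient condition for a small binomial tail bound.**
For naturals `N, R` and reals `ε, δ` with `0 < ε < R/N < 1` and `δ > 0`: if
`(R/(e·ε·N))^R ≥ e^{-εN}/δ`, then
`(Nε/R)^R · ((1-ε)/(1-R/N))^{N-R} ≤ δ`. -/
theorem hoeffding_bound_le_of_condition (N R : ℕ) (ε δ : ℝ) (hε0 : 0 < ε)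
    (hεR : ε < (R : ℝ) / (N : ℝ)) (hR1 : (R : ℝ) / (N : ℝ) < 1) (hδ : 0 < δ)
    (h : ((R : ℝ) / (Real.exp 1 * ε * (N : ℝ))) ^ R ≥ Real.exp (-(ε * (N : ℝ))) / δ) :
    ((N : ℝ) * ε / (R : ℝ)) ^ R *
        ((1 - ε) / (1 - (R : ℝ) / (N : ℝ))) ^ (N - R) ≤ δ := by
  have hN : (0:ℝ) < N := by
    rcases Nat.eq_zero_or_pos N with h0 | h0
    · subst h0; simp at hεR; linarith
    · exact_mod_cast h0
  have hRpos : (0:ℝ) < R := by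
    by_contra hc
    push_neg at hc
    have : (R:ℝ)/N ≤ 0 := div_nonpos_of_nonpos_of_nonneg hc hN.le
    linarith
  have hRN : (R:ℝ) < N := by
    have := (div_lt_one hN).mp hR1
    exact this
  have hRleN : R ≤ N := by exact_mod_cast hRN.le
  have hNR : (0:ℝ) < (N:ℝ) - R := by linarith
  have hden : (0:ℝ) < 1 - (R:ℝ)/N := by linarith
  have hεN : ε * N < R := (lt_div_iff₀ hN).mp hεR
  have hnum : (0:ℝ) < 1 - ε := by
    have : ε < 1 := hεR.trans hR1
    linarith
  -- Step 1: ((1-ε)/(1-R/N))^(N-R) ≤ exp(R - εN)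
  have hx : (1-ε)/(1-(R:ℝ)/N) ≤ Real.exp (((R:ℝ) - ε*N)/((N:ℝ)-R)) := by
    have hle := Real.add_one_le_exp (((R:ℝ) - ε*N)/((N:ℝ)-R))
    have heq : (1-ε)/(1-(R:ℝ)/N) = ((R:ℝ) - ε*N)/((N:ℝ)-R) + 1 := by
      field_simp
      ring
    rw [heq]
    exact hle
  have key : ((1-ε)/(1-(R:ℝ)/N))^(N-R) ≤ Real.exp ((R:ℝ) - ε*N) := by
    calc ((1-ε)/(1-(R:ℝ)/N))^(N-R)
        ≤ (Real.exp (((R:ℝ) - ε*N)/((N:ℝ)-R)))^(N-R) := by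
          apply pow_le_pow_left₀ (by positivity) hx
      _ = Real.exp (((N-R:ℕ):ℝ) * (((R:ℝ) - ε*N)/((N:ℝ)-R))) := by
          rw [Real.exp_nat_mul]
      _ = Real.exp ((R:ℝ) - ε*N) := by
          congr 1
          rw [Nat.cast_sub hRleN]
          field_simp
  -- Step 2: (Nε/R)^R * exp(R - εN) ≤ δ
  have hbound : ((N:ℝ) * ε / R)^R * Real.exp ((R:ℝ) - ε*N) ≤ δ := by
    have hpos : (0:ℝ) < ((R:ℝ) / (Real.exp 1 * ε * N)) ^ R := by positivity
    have h2 : Real.exp (-(ε * N)) ≤ δ * ((R:ℝ) / (Real.exp 1 * ε * N)) ^ R := by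
      rw [ge_iff_le, div_le_iff₀ hδ] at h
      linarith [h]
    have h3 : Real.exp (-(ε * N)) / ((R:ℝ) / (Real.exp 1 * ε * N)) ^ R ≤ δ := by
      rw [div_le_iff₀ hpos]
      linarith
    have heq : Real.exp (-(ε * N)) / ((R:ℝ) / (Real.exp 1 * ε * N)) ^ R
        = ((N:ℝ) * ε / R)^R * Real.exp ((R:ℝ) - ε*N) := by
      have hE : Real.exp ((R:ℝ) - ε*N) = Real.exp 1 ^ R * Real.exp (-(ε*N)) := by
        rw [← Real.exp_nat_mul, ← Real.exp_add]
        congr 1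
        ring
      rw [hE, div_pow, mul_pow]
      field_simp
      rw [mul_pow, ← Real.exp_nat_mul, mul_one]
      have hRR : (R:ℝ)^R * (R:ℝ)⁻¹^R = 1 := by rw [← mul_pow, mul_inv_cancel₀ hRpos.ne', one_pow]
      linear_combination (-(ε ^ R * Real.exp R * (N:ℝ) ^ R)) * hRR
    rw [heq] at h3
    exact h3
  calc ((N:ℝ) * ε / R)^R * ((1-ε)/(1-(R:ℝ)/N))^(N-R)
      ≤ ((N:ℝ) * ε / R)^R * Real.exp ((R:ℝ) - ε*N) := by
        apply mul_le_mul_of_nonneg_left key (by positivity)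
    _ ≤ δ := hbound
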